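/- Let n be an odd positive integer, G a group, and ρ₁, ρ₂ : G → SL(n,ℝ) group homomorphisms. If there exists an invertible complex n×n matrix M such that M·ρ₁(g) = ρ₂(g)·M for all g ∈ G, then there exists a real matrix M' with det M' = 1 such that M'·ρ₁(g) = ρ₂(g)·M' for all g ∈ G. -/

import Mathlib

open Matrix

lemma odd_root_aux (n : ℕ) (hn : 0 < n) (hodd : Odd n) (d : ℝ) (hd : d ≠ 0) :
    ∃ c : ℝ, c ^ n * d = 1 := by
  rcases lt_or_gt_of_ne hd with hneg | hpos
  · refine ⟨-((-d⁻¹) ^ ((n : ℝ)⁻¹)), ?_⟩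
    rw [hodd.neg_pow, Real.rpow_inv_natCast_pow (le_of_lt (neg_pos.mpr (inv_lt_zero.mpr hneg))) hn.ne']
    field_simp
  · refine ⟨(d⁻¹) ^ ((n : ℝ)⁻¹), ?_⟩
    rw [Real.rpow_inv_natCast_pow (by positivity) hn.ne']
    field_simp

/-- For `n` odd, two `SL(n,ℝ)` representations of a group that are conjugate by an
invertible complex matrix are conjugate by a real matrix of determinant one. -/
theorem sl_real_conjugacy_of_complex_conjugacy
    (n : ℕ) (hn : 0 < n) (hodd : Odd n) (G : Type*) [Group G]
    (ρ₁ ρ₂ : G →* Matrix.SpecialLinearGroup (Fin n) ℝ)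
    (M : Matrix (Fin n) (Fin n) ℂ) (hM : IsUnit M)
    (h : ∀ g : G, M * ((ρ₁ g : Matrix (Fin n) (Fin n) ℝ).map (Complex.ofReal ·))
        = ((ρ₂ g : Matrix (Fin n) (Fin n) ℝ).map (Complex.ofReal ·)) * M) :
    ∃ M' : Matrix (Fin n) (Fin n) ℝ, M'.det = 1 ∧
      ∀ g : G, M' * (ρ₁ g : Matrix (Fin n) (Fin n) ℝ)
        = (ρ₂ g : Matrix (Fin n) (Fin n) ℝ) * M' := by
  set A : Matrix (Fin n) (Fin n) ℝ := fun i j => (M i j).re with hA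
  set B : Matrix (Fin n) (Fin n) ℝ := fun i j => (M i j).im with hB
  -- entrywise intertwining
  have key : ∀ g (i j : Fin n),
      (∑ k, M i k * ((ρ₁ g : Matrix (Fin n) (Fin n) ℝ) k j : ℂ))
      = ∑ k, ((ρ₂ g : Matrix (Fin n) (Fin n) ℝ) i k : ℂ) * M k j := by
    intro g i j
    have := congrFun (congrFun (h g) i) j
    simpa [Matrix.mul_apply, Matrix.map_apply] using this
  have hAcomm : ∀ g, A * (ρ₁ g : Matrix (Fin n) (Fin n) ℝ)
      = (ρ₂ g : Matrix (Fin n) (Fin n) ℝ) * A := by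
    intro g
    funext i j
    have := congrArg Complex.re (key g i j)
    rw [Matrix.mul_apply, Matrix.mul_apply]
    simpa [Matrix.mul_apply, Complex.re_sum, Complex.mul_re, hA] using this
  have hBcomm : ∀ g, B * (ρ₁ g : Matrix (Fin n) (Fin n) ℝ)
      = (ρ₂ g : Matrix (Fin n) (Fin n) ℝ) * B := by
    intro g
    funext i j
    have := congrArg Complex.im (key g i j)
    rw [Matrix.mul_apply, Matrix.mul_apply]
    simpa [Matrix.mul_apply, Complex.im_sum, Complex.mul_im, hB] using this
  -- polynomial determinant
  set P : Matrix (Fin n) (Fin n) (Polynomial ℝ) :=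
    A.map Polynomial.C + (Polynomial.X : Polynomial ℝ) • B.map Polynomial.C with hP
  set p : Polynomial ℝ := P.det with hp
  have hdetM : M.det ≠ 0 := by
    have := (Matrix.isUnit_iff_isUnit_det M).mp hM
    exact IsUnit.ne_zero this
  have hMeq : P.map (Polynomial.eval₂RingHom Complex.ofRealHom Complex.I) = M := by
    funext i j
    simp only [hP, Matrix.map_apply, Matrix.add_apply, Matrix.smul_apply, smul_eq_mul]
    simp [hP, Matrix.map_apply, Matrix.add_apply, Matrix.smul_apply, smul_eq_mul,
      hA, hB, Complex.ext_iff]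
  have hpne : p ≠ 0 := by
    intro h0
    apply hdetM
    have := (Polynomial.eval₂RingHom Complex.ofRealHom Complex.I).map_det P
    rw [RingHom.mapMatrix_apply, hMeq] at this
    rw [← this, ← hp, h0, map_zero]
  obtain ⟨t, ht⟩ : ∃ t : ℝ, p.eval t ≠ 0 := by
    by_contra hc
    push_neg at hc
    exact hpne (Polynomial.zero_of_eval_zero p hc)
  set N : Matrix (Fin n) (Fin n) ℝ := A + t • B with hN
  have hNdet : N.det = p.eval t := by
    have := (Polynomial.evalRingHom t).map_det P
    rw [RingHom.mapMatrix_apply, ← hp] at this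
    rw [show Polynomial.eval t p = (Polynomial.evalRingHom t) p from rfl, this]
    congr 1
    funext i j
    simp [hP, hN, Matrix.map_apply, Matrix.add_apply, Matrix.smul_apply, smul_eq_mul]
    ring
  have hNdet0 : N.det ≠ 0 := hNdet ▸ ht
  obtain ⟨c, hc⟩ := odd_root_aux n hn hodd N.det hNdet0
  refine ⟨c • N, ?_, ?_⟩
  · rw [Matrix.det_smul]
    simpa using hc
  · intro g
    rw [Matrix.smul_mul, Matrix.mul_smul]
    congr 1
    rw [hN, Matrix.add_mul, Matrix.mul_add, Matrix.smul_mul, Matrix.mul_smul,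
      hAcomm g, hBcomm g]
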